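/- Lemma 6.1(c) (removing a black bead from a necklace). Let l be a necklace, let v be a black position of l, and let l' = l.eraseIdx v. Then card (P_k(l')) ≤ card (P_k(l)) for every k ≥ 1, and consequently μ_J(l') ≤ μ_J(l) for every J ≥ 1. -/

import Mathlib

namespace Necklace

/-- The cyclic relative position of `p` with respect to `i` on a necklace of length `n`. -/
def cyclicRel (n : ℕ) (i p : Fin n) : ℕ := ((p : ℕ) + n - (i : ℕ)) % n

/-- `InArc i j p` means that the position `p` lies on the clockwise arc from `i` to `j`
(excluding the endpoints `i` and `j`). -/
def InArc {n : ℕ} (i j p : Fin n) : Prop :=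
  0 < cyclicRel n i p ∧ cyclicRel n i p < cyclicRel n i j

instance {n : ℕ} (i j p : Fin n) : Decidable (InArc i j p) :=
  inferInstanceAs (Decidable (0 < cyclicRel n i p ∧ cyclicRel n i p < cyclicRel n i j))

/-- An entry `false` of a necklace is a white bead, an entry `true` is a black bead. -/
def IsWhite (l : List Bool) (p : Fin l.length) : Prop := l.get p = false

def IsBlack (l : List Bool) (p : Fin l.length) : Prop := l.get p = true

instance (l : List Bool) (p : Fin l.length) : Decidable (IsWhite l p) :=
  inferInstanceAs (Decidable (l.get p = false))

instance (l : List Bool) (p : Fin l.length) : Decidable (IsBlack l p) :=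
  inferInstanceAs (Decidable (l.get p = true))

/-- The number of black beads on the clockwise arc from `i` to `j`. -/
def blackArc (l : List Bool) (i j : Fin l.length) : ℕ :=
  (Finset.univ.filter fun p : Fin l.length => InArc i j p ∧ IsBlack l p).card

/-- The number of white beads on the clockwise arc from `i` to `j`. -/
def whiteArc (l : List Bool) (i j : Fin l.length) : ℕ :=
  (Finset.univ.filter fun p : Fin l.length => InArc i j p ∧ IsWhite l p).card

/-- `P l k` is the set of ordered pairs `(i, j)` of distinct white beads of the necklace
`l` whose clockwise arc from `i` to `j` contains at least `k` black beads. -/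
def P (l : List Bool) (k : ℕ) : Finset (Fin l.length × Fin l.length) :=
  Finset.univ.filter fun q : Fin l.length × Fin l.length =>
    q.1 ≠ q.2 ∧ IsWhite l q.1 ∧ IsWhite l q.2 ∧ k ≤ blackArc l q.1 q.2

/-- The `J`-mixture `μ_J(l)` of the necklace `l`. -/
def mixture (J : ℕ) (l : List Bool) : ℕ := ∑ k ∈ Finset.Icc 1 J, (P l k).card

/-- The number of white beads of `l`. -/
def whiteCount (l : List Bool) : ℕ := l.count false


lemma cyclicRel_eq {n : ℕ} (i p : Fin n) :
    cyclicRel n i p = if (i:ℕ) ≤ p then (p:ℕ) - i else (p:ℕ) + n - i := by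
  have hi := i.2; have hp := p.2
  unfold cyclicRel
  split
  · have h : (p:ℕ) + n - i = ((p:ℕ) - i) + n := by omega
    rw [h, Nat.add_mod_right, Nat.mod_eq_of_lt (by omega)]
  · rw [Nat.mod_eq_of_lt (by omega)]

lemma inArc_iff {n : ℕ} (i j p : Fin n) :
    InArc i j p ↔ (((i:ℕ) < p ∧ (p:ℕ) < j) ∨ ((p:ℕ) < j ∧ (j:ℕ) < i) ∨
      ((j:ℕ) < i ∧ (i:ℕ) < p)) := by
  have hi := i.2; have hj := j.2; have hp := p.2
  unfold InArc
  rw [cyclicRel_eq, cyclicRel_eq]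
  split_ifs <;> omega

/-- Embedding of positions of `l.eraseIdx v` into positions of `l`. -/
def emb (l : List Bool) (v : Fin l.length) (p : Fin (l.eraseIdx (v:ℕ)).length) :
    Fin l.length :=
  ⟨if (p:ℕ) < v then (p:ℕ) else (p:ℕ) + 1, by
    have hp := p.2
    have hv := v.2
    have hlen := List.length_eraseIdx (l := l) (i := (v:ℕ))
    rw [if_pos hv] at hlen
    split <;> omega⟩

lemma get_emb (l : List Bool) (v : Fin l.length) (p : Fin (l.eraseIdx (v:ℕ)).length) :
    (l.eraseIdx (v:ℕ)).get p = l.get (emb l v p) := by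
  simp only [emb, List.get_eq_getElem, List.getElem_eraseIdx]
  split_ifs with h <;> simp [h]

lemma emb_lt_iff (l : List Bool) (v : Fin l.length)
    (p q : Fin (l.eraseIdx (v:ℕ)).length) :
    ((emb l v p : ℕ) < (emb l v q : ℕ)) ↔ (p:ℕ) < (q:ℕ) := by
  simp only [emb]
  split_ifs <;> omega

lemma emb_inj (l : List Bool) (v : Fin l.length)
    {p q : Fin (l.eraseIdx (v:ℕ)).length} (h : emb l v p = emb l v q) : p = q := by
  have h1 := emb_lt_iff l v p q
  have h2 := emb_lt_iff l v q p
  have := congrArg Fin.val h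
  apply Fin.ext
  omega

lemma inArc_emb (l : List Bool) (v : Fin l.length)
    (i j p : Fin (l.eraseIdx (v:ℕ)).length) :
    InArc (emb l v i) (emb l v j) (emb l v p) ↔ InArc i j p := by
  rw [inArc_iff, inArc_iff, emb_lt_iff, emb_lt_iff, emb_lt_iff]

lemma blackArc_le_emb (l : List Bool) (v : Fin l.length)
    (i j : Fin (l.eraseIdx (v:ℕ)).length) :
    blackArc (l.eraseIdx (v:ℕ)) i j ≤ blackArc l (emb l v i) (emb l v j) := by
  unfold blackArc
  apply Finset.card_le_card_of_injOn (emb l v)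
  · intro p hp
    simp only [Finset.mem_coe, Finset.mem_filter, Finset.mem_univ, true_and] at hp ⊢
    refine ⟨(inArc_emb l v i j p).mpr hp.1, ?_⟩
    have := hp.2
    unfold IsBlack at this ⊢
    rwa [← get_emb]
  · intro a _ b _ h
    exact emb_inj l v h

/-- Lemma 6.1(c): removing a black bead `v` from a necklace `l` does not increase any
`card (P_k)`, and hence does not increase any `μ_J`. -/
theorem mixture_erase_black (l : List Bool) (hl : l ≠ []) (v : Fin l.length)
    (hv : IsBlack l v) :
    (∀ k : ℕ, 1 ≤ k → (P (l.eraseIdx (v : ℕ)) k).card ≤ (P l k).card) ∧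
    (∀ J : ℕ, 1 ≤ J → mixture J (l.eraseIdx (v : ℕ)) ≤ mixture J l) := by
  have hP : ∀ k : ℕ, (P (l.eraseIdx (v : ℕ)) k).card ≤ (P l k).card := by
    intro k
    apply Finset.card_le_card_of_injOn (fun q => (emb l v q.1, emb l v q.2))
    · intro q hq
      simp only [P, Finset.mem_coe, Finset.mem_filter, Finset.mem_univ, true_and] at hq ⊢
      obtain ⟨hne, hw1, hw2, hk⟩ := hq
      refine ⟨fun h => hne (emb_inj l v h), ?_, ?_, ?_⟩
      · unfold IsWhite at hw1 ⊢; rwa [← get_emb]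
      · unfold IsWhite at hw2 ⊢; rwa [← get_emb]
      · exact le_trans hk (blackArc_le_emb l v q.1 q.2)
    · intro a _ b _ h
      have h1 := congrArg Prod.fst h
      have h2 := congrArg Prod.snd h
      exact Prod.ext (emb_inj l v h1) (emb_inj l v h2)
  refine ⟨fun k _ => hP k, fun J _ => ?_⟩
  unfold mixture
  exact Finset.sum_le_sum fun k _ => hP k

end Necklace
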